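/- One-dimensional localized uncertainty principle: for every bounded interval I and every λ > 0 there is a constant C(λ, I) > 0 such that for all ψ in the Schwartz space of ℝ, ⟨ψ, (p² + λχ_I)ψ⟩ ≥ C(λ, I)·⟨ψ, (1+x²)^{-1}ψ⟩, i.e. ‖ψ'‖² + λ∫_I |ψ|² ≥ C ∫ |ψ(x)|²/(1+x²) dx. -/

import Mathlib

set_option maxHeartbeats 1000000

open MeasureTheory

private noncomputable def auxH (m s β : ℝ) (x : ℝ) : ℝ :=
  -(β*s^2*(x-m)) / (1+s^2*(x-m)^2)

private noncomputable def auxH' (m s β : ℝ) (x : ℝ) : ℝ :=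
  -(β*s^2*(1-s^2*(x-m)^2)) / (1+s^2*(x-m)^2)^2

private lemma auxH_hasDeriv (m s β : ℝ) (x : ℝ) :
    HasDerivAt (auxH m s β) (auxH' m s β x) x := by
  have hD : (0:ℝ) < 1+s^2*(x-m)^2 := by positivity
  have h1 : HasDerivAt (fun y : ℝ => -(β*s^2*(y-m))) (-(β*s^2)) x := by
    have := (((hasDerivAt_id x).sub_const m).const_mul (β*s^2)).neg
    exact this.congr_deriv (by ring : -(β * s ^ 2 * 1) = -(β * s ^ 2))
  have h2 : HasDerivAt (fun y : ℝ => 1+s^2*(y-m)^2) (s^2*(2*(x-m))) x := by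
    have := ((((hasDerivAt_id x).sub_const m).pow 2).const_mul (s^2)).const_add 1
    simpa using this
  have h3 := h1.div h2 hD.ne'
  refine HasDerivAt.congr_deriv h3 ?_
  unfold auxH'
  field_simp
  ring

private lemma auxH_cont (m s β : ℝ) : Continuous (auxH m s β) := by
  apply Continuous.div (by continuity) (by continuity)
  intro x; positivity

private lemma auxH'_cont (m s β : ℝ) : Continuous (auxH' m s β) := by
  apply Continuous.div (by continuity) (by continuity)
  intro x; positivity

private lemma auxH_bound (m s β : ℝ) (hβ : 0 ≤ β) (hs : 0 ≤ s) (x : ℝ) :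
    |auxH m s β x| ≤ β*s := by
  have hD : (0:ℝ) < 1+s^2*(x-m)^2 := by positivity
  unfold auxH
  rw [abs_div, abs_of_pos hD, div_le_iff₀ hD, abs_neg, abs_mul,
    abs_of_nonneg (by positivity : (0:ℝ) ≤ β*s^2)]
  have key : s*|x-m| ≤ 1 + (s*|x-m|)^2 := by nlinarith [sq_nonneg (s*|x-m| - 1)]
  have h2 : (s*|x-m|)^2 = s^2*(x-m)^2 := by rw [mul_pow, sq_abs]
  rw [h2] at key
  nlinarith [mul_le_mul_of_nonneg_left key (mul_nonneg hβ hs)]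

private lemma auxH'_bound (m s β : ℝ) (hβ : 0 ≤ β) (x : ℝ) :
    |auxH' m s β x| ≤ β*s^2 := by
  have hD : (0:ℝ) < 1+s^2*(x-m)^2 := by positivity
  have hD2 : (0:ℝ) < (1+s^2*(x-m)^2)^2 := by positivity
  unfold auxH'
  rw [abs_div, abs_of_pos hD2, div_le_iff₀ hD2, abs_neg, abs_mul,
    abs_of_nonneg (by positivity : (0:ℝ) ≤ β*s^2)]
  have habs : |1-s^2*(x-m)^2| ≤ 1+s^2*(x-m)^2 := by
    rw [abs_le]; constructor <;> nlinarith [sq_nonneg (s*(x-m))]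
  nlinarith [mul_le_mul_of_nonneg_left habs (by positivity : (0:ℝ) ≤ β*s^2),
    mul_nonneg (by positivity : (0:ℝ) ≤ β*s^2) (mul_nonneg (sq_nonneg (s*(x-m))) hD.le)]

private lemma pt_ineq (a b lam m s β C : ℝ) (hab : a < b) (hlam : 0 < lam)
    (hm : m = (a+b)/2) (hs : s = 1 + 5/(b-a))
    (hβ : β = min (1/2) (lam/(2*s^2)))
    (hC : C = min (β/(8*(1+m^2))) (lam/2)) (x : ℝ) :
    C * (1/(1+x^2)) ≤
      (auxH' m s β x - (auxH m s β x)^2)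
      + lam * Set.indicator (Set.Icc a b) (fun _ => (1:ℝ)) x := by
  unfold auxH auxH'
  have hba : 0 < b - a := by linarith
  have hs1 : 1 ≤ s := by
    rw [hs]; have : 0 < 5/(b-a) := by positivity
    linarith
  have hs0 : 0 < s := by linarith
  have hs20 : 20 ≤ s^2*(b-a)^2 := by
    have h1 : s*(b-a) = (b-a) + 5 := by rw [hs]; field_simp
    nlinarith [sq_nonneg (b-a)]
  have hβ0 : 0 < β := by
    rw [hβ]; apply lt_min (by norm_num); positivity
  have hβh : β ≤ 1/2 := by rw [hβ]; exact min_le_left _ _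
  have hβs : β*s^2 ≤ lam/2 := by
    have h1 : β ≤ lam/(2*s^2) := by rw [hβ]; exact min_le_right _ _
    have h2 : (0:ℝ) < s^2 := by positivity
    have h3 := mul_le_mul_of_nonneg_right h1 h2.le
    have heq : lam/(2*s^2)*s^2 = lam/2 := by field_simp
    linarith
  have hC0 : 0 < C := by
    rw [hC]; apply lt_min (by positivity) (by linarith)
  have hCβ : C ≤ β/(8*(1+m^2)) := by rw [hC]; exact min_le_left _ _
  have hClam : C ≤ lam/2 := by rw [hC]; exact min_le_right _ _
  set q : ℝ := s^2*(x-m)^2 with hq_def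
  have hq0 : 0 ≤ q := by positivity
  have hD0 : 0 < 1 + q := by linarith
  have hx0 : (0:ℝ) < 1 + x^2 := by positivity
  have hE : (-(β*s^2*(1-s^2*(x-m)^2)) / (1+s^2*(x-m)^2)^2
        - (-(β*s^2*(x-m)) / (1+s^2*(x-m)^2))^2)
      = (β*s^2*((1-β)*q - 1)) / (1+q)^2 := by
    rw [hq_def]
    have hD0' : (0:ℝ) < 1 + s^2*(x-m)^2 := by positivity
    field_simp
    ring
  rw [hE]
  by_cases hq5 : 5 ≤ q
  · have hind : 0 ≤ lam * Set.indicator (Set.Icc a b) (fun _ => (1:ℝ)) x := by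
      apply mul_nonneg hlam.le
      exact Set.indicator_nonneg (fun _ _ => zero_le_one) x
    have h1 : (1+q)/4 ≤ (1-β)*q - 1 := by
      nlinarith [mul_nonneg (by linarith : (0:ℝ) ≤ 1/2 - β) hq0]
    have h2 : 1 + q ≤ s^2 * (1+(x-m)^2) := by
      rw [hq_def]; nlinarith [sq_nonneg (x-m)]
    have h3 : 1+(x-m)^2 ≤ 2*(1+m^2)*(1+x^2) := by
      nlinarith [sq_nonneg (x+m), sq_nonneg (m*x)]
    have key : β/(8*(1+m^2)) * (1/(1+x^2)) ≤ (β*s^2*((1-β)*q - 1)) / (1+q)^2 := by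
      rw [div_mul_div_comm, mul_one, div_le_div_iff₀ (by positivity) (by positivity)]
      have h4 : 1 + q ≤ 2*s^2*(1+m^2)*(1+x^2) := by nlinarith [sq_nonneg s]
      calc β * (1+q)^2 = β * ((1+q)*(1+q)) := by ring
        _ ≤ β * ((2*s^2*(1+m^2)*(1+x^2))*(4*((1-β)*q-1))) := by
            apply mul_le_mul_of_nonneg_left _ hβ0.le
            apply mul_le_mul h4 (by linarith) hD0.le (by positivity)
        _ = β*s^2*((1-β)*q-1) * (8*(1+m^2)*(1+x^2)) := by ring
    calc C * (1/(1+x^2)) ≤ β/(8*(1+m^2)) * (1/(1+x^2)) := by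
          apply mul_le_mul_of_nonneg_right hCβ (by positivity)
      _ ≤ (β*s^2*((1-β)*q - 1)) / (1+q)^2 := key
      _ ≤ _ := by linarith
  · push_neg at hq5
    have hmem : x ∈ Set.Icc a b := by
      have h5 : (x-m)^2 ≤ ((b-a)/2)^2 := by
        have hs2 : (0:ℝ) < s^2 := by positivity
        rw [hq_def] at hq5
        nlinarith
      have h6 := abs_le_of_sq_le_sq' h5 (by linarith)
      constructor
      · rw [hm] at h6; linarith [h6.1]
      · rw [hm] at h6; linarith [h6.2]
    rw [Set.indicator_of_mem hmem]
    have hE2 : -(lam/2) ≤ (β*s^2*((1-β)*q - 1)) / (1+q)^2 := by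
      rw [le_div_iff₀ (by positivity)]
      have h7 : 0 ≤ β*s^2*((1-β)*q) := by
        apply mul_nonneg (by positivity); nlinarith
      nlinarith [sq_nonneg q, hD0]
    calc C * (1/(1+x^2)) ≤ C * 1 := by
          apply mul_le_mul_of_nonneg_left _ hC0.le
          rw [div_le_one hx0]; nlinarith [sq_nonneg x]
      _ = C := mul_one C
      _ ≤ lam/2 := hClam
      _ ≤ (β*s^2*((1-β)*q - 1)) / (1+q)^2 + lam * 1 := by linarith

private lemma bdd_mul_integrable {g u : ℝ → ℝ} (hg : Continuous g) {M : ℝ}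
    (hb : ∀ x, |g x| ≤ M) (hu : Integrable u) : Integrable (fun x => g x * u x) :=
  hu.bdd_mul hg.aestronglyMeasurable (Filter.Eventually.of_forall fun x => by rw [Real.norm_eq_abs]; exact hb x)

private lemma real_key (a b lam : ℝ) (hab : a < b) (hlam : 0 < lam) :
    ∃ C > 0, ∀ f f' : ℝ → ℝ, (∀ x, HasDerivAt f (f' x) x) → Continuous f' →
      Integrable f → Integrable f' →
      (∃ M, ∀ x, |f x| ≤ M) → (∃ M, ∀ x, |f' x| ≤ M) →
      C * ∫ x : ℝ, f x ^ 2 / (1 + x ^ 2) ≤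
        (∫ x : ℝ, f' x ^ 2) + lam * ∫ x in Set.Icc a b, f x ^ 2 := by
  have hba : 0 < b - a := by linarith
  set m : ℝ := (a+b)/2 with hm
  set s : ℝ := 1 + 5/(b-a) with hs
  set β : ℝ := min (1/2) (lam/(2*s^2)) with hβ
  set C : ℝ := min (β/(8*(1+m^2))) (lam/2) with hC
  have hs1 : 1 ≤ s := by
    rw [hs]; have : 0 < 5/(b-a) := by positivity
    linarith
  have hs0 : 0 < s := by linarith
  have hβ0 : 0 < β := by rw [hβ]; apply lt_min (by norm_num); positivity
  have hC0 : 0 < C := by rw [hC]; apply lt_min (by positivity) (by linarith)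
  refine ⟨C, hC0, ?_⟩
  rintro f f' hd hf'c hfi hf'i ⟨Mf, hMf⟩ ⟨Mg, hMg⟩
  have hfc : Continuous f := by
    have : Differentiable ℝ f := fun x => (hd x).differentiableAt
    exact this.continuous
  -- basic integrable products
  have hff : Integrable (fun x => f x * f x) := bdd_mul_integrable hfc hMf hfi
  have hf'f : Integrable (fun x => f' x * f x) := bdd_mul_integrable hf'c hMg hfi
  have hff' : Integrable (fun x => f x * f' x) := bdd_mul_integrable hfc hMf hf'i
  have hf'f' : Integrable (fun x => f' x * f' x) := bdd_mul_integrable hf'c hMg hf'i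
  -- step A : integral of the derivative of auxH * f^2 vanishes
  have hFd : ∀ x, HasDerivAt (fun y => auxH m s β y * (f y * f y))
      (auxH' m s β x * (f x * f x) + auxH m s β x * (f' x * f x + f x * f' x)) x :=
    fun x => (auxH_hasDeriv m s β x).mul ((hd x).mul (hd x))
  have hFint : Integrable (fun x => auxH m s β x * (f x * f x)) :=
    bdd_mul_integrable (auxH_cont m s β) (auxH_bound m s β hβ0.le hs0.le) hff
  have hF'int : Integrable (fun x => auxH' m s β x * (f x * f x)
      + auxH m s β x * (f' x * f x + f x * f' x)) := by
    apply Integrable.add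
    · exact bdd_mul_integrable (auxH'_cont m s β) (auxH'_bound m s β hβ0.le) hff
    · exact bdd_mul_integrable (auxH_cont m s β) (auxH_bound m s β hβ0.le hs0.le)
        (hf'f.add hff')
  have hA : ∫ x, (auxH' m s β x * (f x * f x)
      + auxH m s β x * (f' x * f x + f x * f' x)) = 0 :=
    integral_eq_zero_of_hasDerivAt_of_integrable hFd hF'int hFint
  -- step B : ∫ (H' - H²) f² ≤ ∫ f'²
  have hVc : Continuous (fun x => auxH' m s β x - (auxH m s β x)^2) :=
    (auxH'_cont m s β).sub ((auxH_cont m s β).pow 2)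
  have hVb : ∀ x, |auxH' m s β x - (auxH m s β x)^2| ≤ β*s^2 + (β*s)^2 := by
    intro x
    rw [sub_eq_add_neg]
    refine (abs_add_le _ _).trans ?_
    rw [abs_neg, abs_pow]
    have h1 := auxH'_bound m s β hβ0.le x
    have h2 := pow_le_pow_left₀ (abs_nonneg _) (auxH_bound m s β hβ0.le hs0.le x) 2
    linarith
  have hVint : Integrable (fun x => (auxH' m s β x - (auxH m s β x)^2) * (f x * f x)) :=
    bdd_mul_integrable hVc hVb hff
  have hSq : Integrable (fun x => (f' x + auxH m s β x * f x)^2) := by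
    have heq : (fun x => (f' x + auxH m s β x * f x)^2)
        = fun x => f' x * f' x + ((2*auxH m s β x)*(f x * f' x)
            + (auxH m s β x * auxH m s β x)*(f x * f x)) := by
      funext x; ring
    rw [heq]
    refine hf'f'.add (Integrable.add ?_ ?_)
    · refine bdd_mul_integrable (continuous_const.mul (auxH_cont m s β))
        (M := 2*(β*s)) (fun x => ?_) hff'
      rw [abs_mul, abs_two]
      have := auxH_bound m s β hβ0.le hs0.le x
      linarith
    · refine bdd_mul_integrable ((auxH_cont m s β).mul (auxH_cont m s β))
        (M := (β*s)*(β*s)) (fun x => ?_) hff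
      rw [abs_mul]
      have h1 := auxH_bound m s β hβ0.le hs0.le x
      have h2 := abs_nonneg (auxH m s β x)
      nlinarith
  have hB : ∫ x, (auxH' m s β x - (auxH m s β x)^2) * (f x * f x)
      ≤ ∫ x, f' x * f' x := by
    have hsub : ∫ x, (f' x * f' x - (auxH' m s β x - (auxH m s β x)^2) * (f x * f x))
        = (∫ x, f' x * f' x)
          - ∫ x, (auxH' m s β x - (auxH m s β x)^2) * (f x * f x) :=
      integral_sub hf'f' hVint
    have hrw : (fun x => f' x * f' x - (auxH' m s β x - (auxH m s β x)^2) * (f x * f x))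
        = fun x => (f' x + auxH m s β x * f x)^2
            - (auxH' m s β x * (f x * f x)
              + auxH m s β x * (f' x * f x + f x * f' x)) := by
      funext x; ring
    have h2 : ∫ x, (f' x * f' x - (auxH' m s β x - (auxH m s β x)^2) * (f x * f x))
        = ∫ x, (f' x + auxH m s β x * f x)^2 := by
      rw [hrw, integral_sub hSq hF'int, hA, sub_zero]
    have h3 : 0 ≤ ∫ x, (f' x + auxH m s β x * f x)^2 :=
      integral_nonneg fun x => sq_nonneg _
    linarith
  -- step C : pointwise bound and integration
  have hpt := pt_ineq a b lam m s β C hab hlam hm hs hβ hC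
  have hptf : ∀ x, C * (f x ^ 2 / (1 + x ^ 2))
      ≤ (auxH' m s β x - (auxH m s β x)^2) * (f x * f x)
        + Set.indicator (Set.Icc a b) (fun y => lam * (f y * f y)) x := by
    intro x
    have h0 := mul_le_mul_of_nonneg_right (hpt x) (sq_nonneg (f x))
    by_cases hx : x ∈ Set.Icc a b
    · rw [Set.indicator_of_mem hx] at h0 ⊢
      have e1 : C * (f x ^ 2 / (1 + x ^ 2)) = C * (1/(1+x^2)) * f x ^ 2 := by ring
      have e2 : (auxH' m s β x - (auxH m s β x)^2) * (f x * f x) + lam * (f x * f x)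
          = (auxH' m s β x - (auxH m s β x)^2 + lam * 1) * f x ^ 2 := by ring
      rw [e1, e2]; exact h0
    · rw [Set.indicator_of_notMem hx] at h0 ⊢
      have e1 : C * (f x ^ 2 / (1 + x ^ 2)) = C * (1/(1+x^2)) * f x ^ 2 := by ring
      have e2 : (auxH' m s β x - (auxH m s β x)^2) * (f x * f x) + 0
          = (auxH' m s β x - (auxH m s β x)^2 + lam * 0) * f x ^ 2 := by ring
      rw [e1, e2]; exact h0
  have hwc : Continuous (fun x : ℝ => 1/(1+x^2)) := by
    apply Continuous.div continuous_const (by continuity)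
    intro x; positivity
  have hwb : ∀ x : ℝ, |1/(1+x^2)| ≤ 1 := by
    intro x
    have hx0 : (0:ℝ) < 1 + x^2 := by positivity
    rw [abs_of_pos (by positivity), div_le_one hx0]
    nlinarith [sq_nonneg x]
  have hlhs_int : Integrable (fun x => f x ^ 2 / (1 + x ^ 2)) := by
    have heq : (fun x => f x ^ 2 / (1 + x ^ 2))
        = fun x => (1/(1+x^2)) * (f x * f x) := by funext x; ring
    rw [heq]; exact bdd_mul_integrable hwc hwb hff
  have hind_int : Integrable
      (fun x => Set.indicator (Set.Icc a b) (fun y => lam * (f y * f y)) x) :=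
    (hff.const_mul lam).indicator measurableSet_Icc
  have hR : (∫ x, ((auxH' m s β x - (auxH m s β x)^2) * (f x * f x)
      + Set.indicator (Set.Icc a b) (fun y => lam * (f y * f y)) x))
      = (∫ x, (auxH' m s β x - (auxH m s β x)^2) * (f x * f x))
        + lam * ∫ x in Set.Icc a b, f x * f x := by
    rw [integral_add hVint hind_int, integral_indicator measurableSet_Icc,
      integral_const_mul]
  have hmono : C * (∫ x : ℝ, f x ^ 2 / (1 + x ^ 2))
      ≤ (∫ x, (auxH' m s β x - (auxH m s β x)^2) * (f x * f x))
        + lam * ∫ x in Set.Icc a b, f x * f x := by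
    calc C * (∫ x : ℝ, f x ^ 2 / (1 + x ^ 2))
        = ∫ x : ℝ, C * (f x ^ 2 / (1 + x ^ 2)) := (integral_const_mul C _).symm
      _ ≤ ∫ x, ((auxH' m s β x - (auxH m s β x)^2) * (f x * f x)
            + Set.indicator (Set.Icc a b) (fun y => lam * (f y * f y)) x) :=
          integral_mono (hlhs_int.const_mul C) (hVint.add hind_int) hptf
      _ = _ := hR
  have e3 : (∫ x : ℝ, f' x ^ 2) = ∫ x : ℝ, f' x * f' x := by simp_rw [pow_two]
  have e4 : (∫ x in Set.Icc a b, f x ^ 2) = ∫ x in Set.Icc a b, f x * f x := by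
    simp_rw [pow_two]
  rw [e3, e4]
  linarith

/-- One-dimensional localized uncertainty principle: for a bounded nondegenerate
interval `I = [a,b]` and `λ > 0` there is `C > 0` such that for all Schwartz `ψ`,
`‖ψ'‖² + λ ∫_I |ψ|² ≥ C ∫ |ψ(x)|²/(1+x²) dx`. -/
theorem stmt_7 (a b lam : ℝ) (hab : a < b) (hlam : 0 < lam) :
    ∃ C > 0, ∀ ψ : SchwartzMap ℝ ℂ,
      C * ∫ x : ℝ, ‖ψ x‖ ^ 2 / (1 + x ^ 2) ≤
        (∫ x : ℝ, ‖deriv (⇑ψ) x‖ ^ 2) + lam * ∫ x in Set.Icc a b, ‖ψ x‖ ^ 2 := by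
  obtain ⟨C, hC0, hkey⟩ := real_key a b lam hab hlam
  refine ⟨C, hC0, fun ψ => ?_⟩
  have hnorm : ∀ z : ℂ, ‖z‖^2 = z.re^2 + z.im^2 := fun z => by
    rw [Complex.sq_norm, Complex.normSq_apply]; ring
  have habs_re : ∀ z : ℂ, |z.re| ≤ ‖z‖ := fun z => by
    exact Complex.abs_re_le_norm z
  have habs_im : ∀ z : ℂ, |z.im| ≤ ‖z‖ := fun z => by
    exact Complex.abs_im_le_norm z
  have hco : ⇑(SchwartzMap.derivCLM ℝ ℂ ψ) = deriv (⇑ψ) := by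
    funext x; exact SchwartzMap.derivCLM_apply (𝕜 := ℝ) ψ x
  have hdc : Continuous (deriv (⇑ψ)) := hco ▸ (SchwartzMap.derivCLM ℝ ℂ ψ).continuous
  have hdi : Integrable (deriv (⇑ψ)) := hco ▸ (SchwartzMap.derivCLM ℝ ℂ ψ).integrable
  have hbnd : ∀ φ : SchwartzMap ℝ ℂ, ∃ M, ∀ x, ‖φ x‖ ≤ M := fun φ => by
    obtain ⟨M, -, hM⟩ := φ.decay 0 0
    exact ⟨M, fun x => by simpa [norm_iteratedFDeriv_zero] using hM x⟩
  obtain ⟨M1, hM1⟩ := hbnd ψ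
  obtain ⟨M2, hM2'⟩ := hbnd (SchwartzMap.derivCLM ℝ ℂ ψ)
  have hM2 : ∀ x, ‖deriv (⇑ψ) x‖ ≤ M2 := by rw [← hco]; exact hM2'
  -- derivatives of components
  have hdψ : ∀ x, HasDerivAt (⇑ψ) (deriv (⇑ψ) x) x := fun x =>
    ψ.differentiableAt.hasDerivAt
  have hre_d : ∀ x, HasDerivAt (fun y => (ψ y).re) ((deriv (⇑ψ) x).re) x := fun x => by
    exact Complex.reCLM.hasFDerivAt.comp_hasDerivAt x (hdψ x)
  have him_d : ∀ x, HasDerivAt (fun y => (ψ y).im) ((deriv (⇑ψ) x).im) x := fun x => by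
    exact Complex.imCLM.hasFDerivAt.comp_hasDerivAt x (hdψ x)
  -- integrability of components
  have comp_int : ∀ (g : ℝ → ℂ), Continuous g → Integrable g →
      Integrable (fun x => (g x).re) ∧ Integrable (fun x => (g x).im) := by
    intro g hgc hgi
    constructor
    · refine hgi.norm.mono' ((Complex.continuous_re.comp hgc).aestronglyMeasurable) ?_
      filter_upwards with x
      rw [Real.norm_eq_abs]; exact habs_re _
    · refine hgi.norm.mono' ((Complex.continuous_im.comp hgc).aestronglyMeasurable) ?_
      filter_upwards with x
      rw [Real.norm_eq_abs]; exact habs_im _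
  obtain ⟨hre_int, him_int⟩ := comp_int (⇑ψ) ψ.continuous ψ.integrable
  obtain ⟨hre_d_int, him_d_int⟩ := comp_int (deriv (⇑ψ)) hdc hdi
  -- the two real inequalities
  have I1 := hkey (fun x => (ψ x).re) (fun x => (deriv (⇑ψ) x).re) hre_d
    (Complex.continuous_re.comp hdc) hre_int hre_d_int
    ⟨M1, fun x => (habs_re _).trans (hM1 x)⟩ ⟨M2, fun x => (habs_re _).trans (hM2 x)⟩
  have I2 := hkey (fun x => (ψ x).im) (fun x => (deriv (⇑ψ) x).im) him_d
    (Complex.continuous_im.comp hdc) him_int him_d_int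
    ⟨M1, fun x => (habs_im _).trans (hM1 x)⟩ ⟨M2, fun x => (habs_im _).trans (hM2 x)⟩
  -- integrability for the splittings
  have hwc : Continuous (fun x : ℝ => 1/(1+x^2)) := by
    apply Continuous.div continuous_const (by continuity)
    intro x; positivity
  have hwb : ∀ x : ℝ, |1/(1+x^2)| ≤ 1 := by
    intro x
    have hx0 : (0:ℝ) < 1 + x^2 := by positivity
    rw [abs_of_pos (by positivity), div_le_one hx0]
    nlinarith [sq_nonneg x]
  have sq_int : ∀ (u : ℝ → ℝ), Continuous u → Integrable u → (∀ x, |u x| ≤ M1 + M2) →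
      Integrable (fun x => u x ^ 2) ∧ Integrable (fun x => u x ^ 2 / (1 + x ^ 2)) := by
    intro u huc hui hub
    have h1 : Integrable (fun x => u x * u x) := bdd_mul_integrable huc hub hui
    have h2 : (fun x => u x ^ 2) = fun x => u x * u x := by funext x; ring
    have h3 : (fun x => u x ^ 2 / (1 + x ^ 2)) = fun x => (1/(1+x^2)) * (u x * u x) := by
      funext x; ring
    exact ⟨h2 ▸ h1, h3 ▸ bdd_mul_integrable hwc hwb h1⟩
  have hM1' : 0 ≤ M1 := le_trans (norm_nonneg _) (hM1 0)
  have hM2'' : 0 ≤ M2 := le_trans (norm_nonneg _) (hM2 0)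
  obtain ⟨re_sq, re_sq_w⟩ := sq_int (fun x => (ψ x).re)
    (Complex.continuous_re.comp ψ.continuous) hre_int
    (fun x => (habs_re _).trans ((hM1 x).trans (by linarith)))
  obtain ⟨im_sq, im_sq_w⟩ := sq_int (fun x => (ψ x).im)
    (Complex.continuous_im.comp ψ.continuous) him_int
    (fun x => (habs_im _).trans ((hM1 x).trans (by linarith)))
  obtain ⟨dre_sq, _⟩ := sq_int (fun x => (deriv (⇑ψ) x).re)
    (Complex.continuous_re.comp hdc) hre_d_int
    (fun x => (habs_re _).trans ((hM2 x).trans (by linarith)))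
  obtain ⟨dim_sq, _⟩ := sq_int (fun x => (deriv (⇑ψ) x).im)
    (Complex.continuous_im.comp hdc) him_d_int
    (fun x => (habs_im _).trans ((hM2 x).trans (by linarith)))
  -- splitting the three integrals
  have E1 : ∫ x : ℝ, ‖ψ x‖ ^ 2 / (1 + x ^ 2)
      = (∫ x : ℝ, (ψ x).re ^ 2 / (1 + x ^ 2)) + ∫ x : ℝ, (ψ x).im ^ 2 / (1 + x ^ 2) := by
    have h : (fun x : ℝ => ‖ψ x‖ ^ 2 / (1 + x ^ 2))
        = fun x => (ψ x).re ^ 2 / (1 + x ^ 2) + (ψ x).im ^ 2 / (1 + x ^ 2) := by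
      funext x; rw [hnorm (ψ x)]; ring
    rw [h, integral_add re_sq_w im_sq_w]
  have E2 : ∫ x : ℝ, ‖deriv (⇑ψ) x‖ ^ 2
      = (∫ x : ℝ, (deriv (⇑ψ) x).re ^ 2) + ∫ x : ℝ, (deriv (⇑ψ) x).im ^ 2 := by
    have h : (fun x : ℝ => ‖deriv (⇑ψ) x‖ ^ 2)
        = fun x => (deriv (⇑ψ) x).re ^ 2 + (deriv (⇑ψ) x).im ^ 2 := by
      funext x; rw [hnorm (deriv (⇑ψ) x)]
    rw [h, integral_add dre_sq dim_sq]
  have E3 : ∫ x in Set.Icc a b, ‖ψ x‖ ^ 2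
      = (∫ x in Set.Icc a b, (ψ x).re ^ 2) + ∫ x in Set.Icc a b, (ψ x).im ^ 2 := by
    have h : (fun x : ℝ => ‖ψ x‖ ^ 2)
        = fun x => (ψ x).re ^ 2 + (ψ x).im ^ 2 := by
      funext x; rw [hnorm (ψ x)]
    rw [h, integral_add re_sq.integrableOn im_sq.integrableOn]
  rw [E1, E2, E3, mul_add, mul_add]
  linarith
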